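/- Minimal revision is universal on the class of finitely identifiable epistemic spaces: if an epistemic space has a definite finite tell-tale map, then the canonical learning method induced by minimal revision with the uniform (all states equi-plausible) prior identifies every state of the space in the limit. -/
import Mathlib


namespace Epi

variable {W : Type*}

/-- The set of observables true at state `s`. -/
def obsAt (O : Set (Set W)) (s : W) : Set (Set W) := {p ∈ O | s ∈ p}

/-- The epistemic-space separation condition: distinct worlds satisfy distinct observables. -/
def Separating (O : Set (Set W)) : Prop := ∀ s t : W, obsAt O s = obsAt O t → s = t

/-- `≼`-minimal elements of a set `X`. -/
def minIn (R : W → W → Prop) (X : Set W) : Set W :=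
  {s ∈ X | ∀ t ∈ X, (R s t ∨ R t s) → R s t}

def PreorderOn (R : W → W → Prop) : Prop := Reflexive R ∧ Transitive R

def TotalPreorderOn (R : W → W → Prop) : Prop :=
  Reflexive R ∧ Transitive R ∧ ∀ s t : W, R s t ∨ R t s

/-- Strict part of a preorder. -/
def strictR (R : W → W → Prop) (s t : W) : Prop := R s t ∧ ¬ R t s

/-- One-step minimal revision (conservative upgrade) by observable `p`. -/
def miniRev (R : W → W → Prop) (p : Set W) : W → W → Prop :=
  fun s t => (s ∈ minIn R p ∧ t ∉ minIn R p) ∨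
    (R s t ∧ ¬ (t ∈ minIn R p ∧ s ∉ minIn R p))

/-- One-step lexicographic upgrade by observable `p`. -/
def lexRev (R : W → W → Prop) (p : Set W) : W → W → Prop :=
  fun s t => (s ∈ p ∧ t ∈ p ∧ R s t) ∨ (s ∉ p ∧ t ∉ p ∧ R s t) ∨ (s ∈ p ∧ t ∉ p)

/-- Iterated belief revision along a finite data sequence. -/
def iterRev (rev : (W → W → Prop) → Set W → (W → W → Prop))
    (R : W → W → Prop) (σ : List (Set W)) : W → W → Prop :=
  σ.foldl rev R

/-- The initial segment of length `n` of a data stream. -/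
def seg (f : ℕ → Set W) (n : ℕ) : List (Set W) := (List.range n).map f

/-- All elements of the stream are observables. -/
def StreamIn (O : Set (Set W)) (f : ℕ → Set W) : Prop := ∀ n, f n ∈ O

/-- Soundness of a stream w.r.t. `s`. -/
def SoundStream (s : W) (f : ℕ → Set W) : Prop := ∀ n, s ∈ f n

/-- Completeness of a stream w.r.t. `s`. -/
def CompleteStream (O : Set (Set W)) (s : W) (f : ℕ → Set W) : Prop :=
  ∀ p ∈ obsAt O s, ∃ n, f n = p

/-- Canonical learner induced by minimal revision and prior `R`. -/
def miniLearner (R : W → W → Prop) (σ : List (Set W)) : Set W :=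
  minIn (iterRev miniRev R σ) Set.univ

/-- Canonical learner induced by lexicographic upgrade and prior `R`. -/
def lexLearner (R : W → W → Prop) (σ : List (Set W)) : Set W :=
  minIn (iterRev lexRev R σ) Set.univ

/-- Canonical learner induced by conditioning and prior `R`:
minimal elements among the worlds surviving all observations in `σ`. -/
def condLearner (R : W → W → Prop) (σ : List (Set W)) : Set W :=
  minIn R {w | ∀ p ∈ σ, w ∈ p}

/-- A learner identifies state `s` in the limit. -/
def IdentifiesInLimit (O : Set (Set W)) (L : List (Set W) → Set W) (s : W) : Prop :=
  ∀ f : ℕ → Set W, StreamIn O f → SoundStream s f → CompleteStream O s f →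
    ∃ n, ∀ k, n ≤ k → L (seg f k) = {s}

/-- Finite identification: the learner makes exactly one guess, and it is correct. -/
def FinitelyIdentifies (O : Set (Set W)) (L : List (Set W) → Option W) (s : W) : Prop :=
  ∀ f : ℕ → Set W, StreamIn O f → SoundStream s f → CompleteStream O s f →
    ∃ n, L (seg f n) = some s ∧ ∀ m, m ≠ n → L (seg f m) = none

/-- A definite finite tell-tale map. -/
def DFTTMap (O : Set (Set W)) (D : W → Set (Set W)) : Prop :=
  ∀ s : W, (D s).Finite ∧ D s ⊆ obsAt O s ∧ ∀ t : W, D s ⊆ obsAt O t → s = t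

/-- A finite space mini tell-tale map for `R` and the space. -/
def FSMiniTellTaleMap (O : Set (Set W)) (R : W → W → Prop) (F : W → Set (Set W)) : Prop :=
  ∀ s : W, F s ⊆ obsAt O s ∧
    ∃ p ∈ F s, s ∈ minIn R p ∧
      ∀ t : W, t ≠ s → (R s t ∧ R t s) → t ∈ minIn R p →
        ∃ q ∈ F s, s ∈ minIn R q ∧ t ∉ minIn R q

/-- A generalised conditioning tell-tale map for `R` and the space. -/
def GenCondTellTaleMap (O : Set (Set W)) (R : W → W → Prop) (F : W → Set (Set W)) : Prop :=
  ∀ s : W,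
    (F s).Finite ∧ F s ⊆ obsAt O s ∧
    (∀ t : W, (R s t ∨ R t s) → F s ⊆ obsAt O t → s ≠ t → strictR R s t) ∧
    (∀ F' : Set (Set W), F'.Finite → F s ⊆ F' → F' ⊆ obsAt O s →
      ∀ t : W, ¬ (R s t ∨ R t s) → F' ⊆ obsAt O t →
        ∃ v : W, strictR R v t ∧ F' ⊆ obsAt O v)

/-- Fair data stream w.r.t. `s` (finitely many, eventually corrected, errors). -/
def FairStream (O : Set (Set W)) (s : W) (f : ℕ → Set W) : Prop :=
  CompleteStream O s f ∧ (∃ n, ∀ k, n ≤ k → s ∈ f k) ∧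
    (∀ i, s ∉ f i → ∃ k, i < k ∧ f k = (f i)ᶜ)


lemma mem_minIn_of_min {R : W → W → Prop} {p : Set W} {a : W}
    (ha : a ∈ p) (h : ∀ t, R a t) : a ∈ minIn R p :=
  ⟨ha, fun t _ _ => h t⟩

lemma minIn_forall {R : W → W → Prop} (htot : ∀ s t : W, R s t ∨ R t s)
    {p : Set W} {a : W} (ha : a ∈ minIn R p) : ∀ t ∈ p, R a t :=
  fun t ht => ha.2 t ht (htot a t)

/-- Key one-step lemma: conservatively upgrading a total preorder by `p ∋ s`,
where `s` is globally minimal, yields a total preorder in which `s` is globally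
minimal and whose global minimum is `p ∩ (old minimum)`. -/
lemma miniRev_step {R : W → W → Prop} (hR : TotalPreorderOn R) {s : W} {p : Set W}
    (hsp : s ∈ p) (hsmin : ∀ t, R s t) :
    TotalPreorderOn (miniRev R p) ∧ (∀ t, miniRev R p s t) ∧
      minIn (miniRev R p) Set.univ = p ∩ minIn R Set.univ := by
  obtain ⟨hrefl, htrans, htot⟩ := hR
  set M : Set W := minIn R p with hM
  have hsM : s ∈ M := mem_minIn_of_min hsp hsmin
  have hMall : ∀ a ∈ M, ∀ t ∈ p, R a t := fun a ha => minIn_forall htot ha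
  -- M = p ∩ minIn R univ
  have hMeq : M = p ∩ minIn R Set.univ := by
    ext a
    constructor
    · intro ha
      refine ⟨ha.1, Set.mem_univ a, fun t _ _ => ?_⟩
      exact htrans (hMall a ha s hsp) (hsmin t)
    · rintro ⟨hap, hmin⟩
      exact mem_minIn_of_min hap fun t => hmin.2 t (Set.mem_univ t) (htot a t)
  have hsmin' : ∀ t, miniRev R p s t := by
    intro t
    by_cases ht : t ∈ M
    · exact Or.inr ⟨hsmin t, fun h => h.2 hsM⟩
    · exact Or.inl ⟨hsM, ht⟩
  have htot' : ∀ a b : W, miniRev R p a b ∨ miniRev R p b a := by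
    intro a b
    by_cases ha : a ∈ M <;> by_cases hb : b ∈ M
    · rcases htot a b with h | h
      · exact Or.inl (Or.inr ⟨h, fun hc => hc.2 ha⟩)
      · exact Or.inr (Or.inr ⟨h, fun hc => hc.2 hb⟩)
    · exact Or.inl (Or.inl ⟨ha, hb⟩)
    · exact Or.inr (Or.inl ⟨hb, ha⟩)
    · rcases htot a b with h | h
      · exact Or.inl (Or.inr ⟨h, fun hc => absurd hc.1 hb⟩)
      · exact Or.inr (Or.inr ⟨h, fun hc => absurd hc.1 ha⟩)
  have htrans' : ∀ a b c : W, miniRev R p a b → miniRev R p b c → miniRev R p a c := by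
    intro a b c hab hbc
    by_cases ha : a ∈ M
    · by_cases hc : c ∈ M
      · exact Or.inr ⟨hMall a ha c hc.1, fun h => h.2 ha⟩
      · exact Or.inl ⟨ha, hc⟩
    · have hab' : R a b ∧ b ∉ M := by
        rcases hab with h | h
        · exact absurd h.1 ha
        · exact ⟨h.1, fun hb => h.2 ⟨hb, ha⟩⟩
      have hbc' : R b c ∧ c ∉ M := by
        rcases hbc with h | h
        · exact absurd h.1 hab'.2
        · exact ⟨h.1, fun hcM => h.2 ⟨hcM, hab'.2⟩⟩
      exact Or.inr ⟨htrans hab'.1 hbc'.1, fun h => hbc'.2 h.1⟩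
  refine ⟨⟨fun a => Or.inr ⟨hrefl a, fun h => h.2 h.1⟩, fun {a b c} => htrans' a b c, htot'⟩,
    hsmin', ?_⟩
  rw [← hMeq]
  ext a
  constructor
  · intro haMin
    by_contra haM
    have h1 : miniRev R p s a := Or.inl ⟨hsM, haM⟩
    have h2 : miniRev R p a s := haMin.2 s (Set.mem_univ s) (Or.inr h1)
    rcases h2 with h | h
    · exact haM h.1
    · exact h.2 ⟨hsM, haM⟩
  · intro haM
    refine mem_minIn_of_min (Set.mem_univ a) fun t => ?_
    by_cases ht : t ∈ M
    · exact Or.inr ⟨hMall a haM t ht.1, fun h => h.2 haM⟩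
    · exact Or.inl ⟨haM, ht⟩

lemma iter_sound {s : W} : ∀ (σ : List (Set W)) (R : W → W → Prop),
    TotalPreorderOn R → (∀ p ∈ σ, s ∈ p) → (∀ t, R s t) →
    minIn (iterRev miniRev R σ) Set.univ =
      {w | ∀ p ∈ σ, w ∈ p} ∩ minIn R Set.univ := by
  intro σ
  induction σ with
  | nil =>
    intro R hR _ _
    simp only [iterRev, List.foldl_nil, List.not_mem_nil,
      false_implies, implies_true, Set.setOf_true, Set.univ_inter]
  | cons p σ ih =>
    intro R hR hsound hsmin
    have hstep := miniRev_step hR (hsound p (by simp)) hsmin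
    have hiter : iterRev miniRev R (p :: σ) = iterRev miniRev (miniRev R p) σ := rfl
    rw [hiter, ih (miniRev R p) hstep.1 (fun q hq => hsound q (by simp [hq])) hstep.2.1,
      hstep.2.2]
    ext w
    simp only [Set.mem_inter_iff, Set.mem_setOf_eq, List.mem_cons]
    constructor
    · rintro ⟨h1, h2, h3⟩
      exact ⟨fun q hq => hq.elim (fun e => e ▸ h2) (h1 q), h3⟩
    · rintro ⟨h1, h2⟩
      exact ⟨fun q hq => h1 q (Or.inr hq), h1 p (Or.inl rfl), h2⟩

/-- Minimal revision with the uniform prior identifies in the limit every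
state of a space that has a definite finite tell-tale map. -/
theorem mini_universal_on_finitely_identifiable {W : Type*} (O : Set (Set W))
    (hsep : Separating O)
    (D : W → Set (Set W)) (hD : DFTTMap O D) :
    ∀ s : W, IdentifiesInLimit O (miniLearner (fun _ _ : W => True)) s := by
  intro s f hin hsound hcomp
  classical
  obtain ⟨hfin, hsub, huniq⟩ := hD s
  -- choose a stage by which all of `D s` has appeared
  have hex : ∀ p ∈ hfin.toFinset, ∃ n, f n = p := by
    intro p hp
    exact hcomp p (hsub (hfin.mem_toFinset.mp hp))
  choose g hg using hex
  set N : ℕ := (hfin.toFinset.sup fun p => if h : p ∈ hfin.toFinset then g p h else 0) + 1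
    with hN
  refine ⟨N, fun k hk => ?_⟩
  have hR0 : TotalPreorderOn (fun _ _ : W => True) :=
    ⟨fun _ => trivial, fun {_ _ _} _ _ => trivial, fun _ _ => Or.inl trivial⟩
  have hsnd : ∀ p ∈ seg f k, s ∈ p := by
    intro p hp
    simp only [seg, List.mem_map, List.mem_range] at hp
    obtain ⟨n, _, rfl⟩ := hp
    exact hsound n
  have hmin0 : minIn (fun _ _ : W => True) Set.univ = Set.univ := by
    ext a; simp [minIn]
  have hlearn : miniLearner (fun _ _ : W => True) (seg f k)
      = {w | ∀ p ∈ seg f k, w ∈ p} ∩ minIn (fun _ _ : W => True) Set.univ :=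
    iter_sound (seg f k) _ hR0 hsnd fun _ => trivial
  rw [hlearn, hmin0, Set.inter_univ]
  ext t
  simp only [Set.mem_setOf_eq, Set.mem_singleton_iff]
  constructor
  · intro ht
    refine (huniq t ?_).symm
    intro p hp
    have hpF : p ∈ hfin.toFinset := hfin.mem_toFinset.mpr hp
    have hgp : g p hpF < k := by
      have hle : (if h : p ∈ hfin.toFinset then g p h else 0) ≤
          hfin.toFinset.sup fun q => if h : q ∈ hfin.toFinset then g q h else 0 :=
        Finset.le_sup (f := fun q => if h : q ∈ hfin.toFinset then g q h else 0) hpF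
      simp only [dif_pos hpF] at hle
      omega
    have hmem : f (g p hpF) ∈ seg f k := by
      simp only [seg, List.mem_map, List.mem_range]
      exact ⟨g p hpF, hgp, rfl⟩
    have := ht _ hmem
    rw [hg p hpF] at this
    exact ⟨(hsub hp).1, this⟩
  · rintro rfl
    exact hsnd

end Epi
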